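/- arXiv:1506.08994 — 2 statements merged into one kernel-verified Lean document; each statement's English description precedes it below -/
import Mathlib

section
/- Let P be a finite nonempty set of nonzero polynomials in k[x_1,…,x_n] and let A be an ascending set contained in the ideal ⟨P⟩. Then A is a Ritt characteristic set of ⟨P⟩ if and only if prem(F, A) = 0 for every polynomial F ∈ ⟨P⟩. -/
open MvPolynomial

namespace CharSets

variable {n : ℕ} {K : Type*} [Field K]

/-- The coefficient of `x_i ^ d` in `F`, as a polynomial in the remaining variables. -/
noncomputable def coefv (i : Fin n) (d : ℕ) (F : MvPolynomial (Fin n) K) :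
    MvPolynomial (Fin n) K :=
  ∑ m ∈ F.support.filter (fun m => m i = d), monomial (Finsupp.erase i m) (F.coeff m)

/-- The leading coefficient of `F` with respect to the variable `x_i`. -/
noncomputable def lcv (i : Fin n) (F : MvPolynomial (Fin n) K) : MvPolynomial (Fin n) K :=
  coefv i (F.degreeOf i) F

/-- Auxiliary pseudo-division: computes (pseudo-quotient, pseudo-remainder) pairs,
with the first argument as fuel; the total power of the leading coefficient used is
exactly the fuel, so that starting with fuel `max(l - m + 1, 0)` yields the pair
`(Q, R)` of the unique representation `lc(F,x_i)^q • G = Q*F + R` with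
`q = max(l - m + 1, 0)` and `deg(R, x_i) < deg(F, x_i)`. -/
noncomputable def pdivAux (i : Fin n) (F : MvPolynomial (Fin n) K) :
    ℕ → MvPolynomial (Fin n) K × MvPolynomial (Fin n) K →
      MvPolynomial (Fin n) K × MvPolynomial (Fin n) K
  | 0, QR => QR
  | q + 1, QR =>
    if (QR.2).degreeOf i < F.degreeOf i then
      (lcv i F ^ (q + 1) * QR.1, lcv i F ^ (q + 1) * QR.2)
    else
      pdivAux i F q
        (lcv i F * QR.1 +
            coefv i ((QR.2).degreeOf i) QR.2 * X i ^ ((QR.2).degreeOf i - F.degreeOf i),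
          lcv i F * QR.2 -
            coefv i ((QR.2).degreeOf i) QR.2 * X i ^ ((QR.2).degreeOf i - F.degreeOf i) * F)

/-- The pseudo-remainder `prem(G, F, x_i)`. -/
noncomputable def prem (G F : MvPolynomial (Fin n) K) (i : Fin n) : MvPolynomial (Fin n) K :=
  (pdivAux i F (G.degreeOf i + 1 - F.degreeOf i) (0, G)).2

/-- The pseudo-quotient `pquo(G, F, x_i)`. -/
noncomputable def pquo (G F : MvPolynomial (Fin n) K) (i : Fin n) : MvPolynomial (Fin n) K :=
  (pdivAux i F (G.degreeOf i + 1 - F.degreeOf i) (0, G)).1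

/-- The class of `P`: the largest index (1-based) of a variable actually occurring in `P`;
the class of a constant is `0`. -/
noncomputable def cls (P : MvPolynomial (Fin n) K) : ℕ :=
  P.vars.sup fun i => (i : ℕ) + 1

/-- The degree of `G` in the leading variable of `P` (`0` if `P` is constant). -/
noncomputable def degLv (G P : MvPolynomial (Fin n) K) : ℕ :=
  if h : P.vars.Nonempty then G.degreeOf (P.vars.max' h) else 0

/-- `G` is R-reduced with respect to `P`, i.e. `deg(G, lv(P)) < deg(P, lv(P))`. -/
def RReduced (G P : MvPolynomial (Fin n) K) : Prop :=
  degLv G P < degLv P P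

/-- The initial of `P`: its leading coefficient w.r.t. its leading variable. -/
noncomputable def ini (P : MvPolynomial (Fin n) K) : MvPolynomial (Fin n) K :=
  if h : P.vars.Nonempty then lcv (P.vars.max' h) P else P

/-- Pseudo-remainder of `G` w.r.t. `F` in the leading variable of `F`
(in case `F` is constant, `m = 0` and the pseudo-remainder is `0`). -/
noncomputable def premLv (G F : MvPolynomial (Fin n) K) : MvPolynomial (Fin n) K :=
  if h : F.vars.Nonempty then prem G F (F.vars.max' h) else 0

/-- Pseudo-quotient of `G` w.r.t. `F` in the leading variable of `F`. -/
noncomputable def pquoLv (G F : MvPolynomial (Fin n) K) : MvPolynomial (Fin n) K :=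
  if h : F.vars.Nonempty then pquo G F (F.vars.max' h) else 0

/-- Iterated pseudo-remainder with respect to a triangular set `[T_1, …, T_r]`:
`prem(P, T) = prem(⋯prem(P, T_r, lv(T_r)), …, T_1, lv(T_1))`. -/
noncomputable def premTS (P : MvPolynomial (Fin n) K) (L : List (MvPolynomial (Fin n) K)) :
    MvPolynomial (Fin n) K :=
  L.foldr (fun T acc => premLv acc T) P

/-- The Sylvester matrix of `F` and `G` with respect to the variable `x_i`. -/
noncomputable def sylvester (i : Fin n) (F G : MvPolynomial (Fin n) K) :
    Matrix (Fin (G.degreeOf i + F.degreeOf i)) (Fin (G.degreeOf i + F.degreeOf i))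
      (MvPolynomial (Fin n) K) :=
  Matrix.of fun r c =>
    if (r : ℕ) < G.degreeOf i then
      if (r : ℕ) ≤ (c : ℕ) ∧ (c : ℕ) ≤ (r : ℕ) + F.degreeOf i then
        coefv i (F.degreeOf i + (r : ℕ) - (c : ℕ)) F
      else 0
    else
      if (r : ℕ) - G.degreeOf i ≤ (c : ℕ) ∧ (c : ℕ) ≤ (r : ℕ) then
        coefv i (G.degreeOf i + ((r : ℕ) - G.degreeOf i) - (c : ℕ)) G
      else 0

/-- The resultant `res(F, G, x_i)` of `F` and `G` w.r.t. `x_i`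
(the determinant of the Sylvester matrix). -/
noncomputable def resv (F G : MvPolynomial (Fin n) K) (i : Fin n) : MvPolynomial (Fin n) K :=
  (sylvester i F G).det

/-- Resultant of `F` and `G` w.r.t. the leading variable of `G`. -/
noncomputable def resLv (F G : MvPolynomial (Fin n) K) : MvPolynomial (Fin n) K :=
  if h : G.vars.Nonempty then resv F G (G.vars.max' h) else F

/-- Iterated resultant with respect to a triangular set:
`res(F, T) = res(⋯res(F, T_r, lv(T_r)), …, T_1, lv(T_1))`. -/
noncomputable def resTS (F : MvPolynomial (Fin n) K) (L : List (MvPolynomial (Fin n) K)) :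
    MvPolynomial (Fin n) K :=
  L.foldr (fun T acc => resLv acc T) F

/-- A triangular set: a nonempty ordered set of nonconstant polynomials with
strictly increasing classes. -/
def TriangularSet (L : List (MvPolynomial (Fin n) K)) : Prop :=
  L ≠ [] ∧ (∀ T ∈ L, 0 < cls T) ∧ L.Chain' fun A B => cls A < cls B

/-- An ascending set: either a single nonzero constant, or a triangular set in which
every later element is R-reduced with respect to every earlier one. -/
def AscendingSet (L : List (MvPolynomial (Fin n) K)) : Prop :=
  (∃ a : K, a ≠ 0 ∧ L = [MvPolynomial.C a]) ∨
    (TriangularSet L ∧ L.Pairwise fun A B => RReduced B A)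

/-- `F` has lower rank than `G`. -/
def rkLT (F G : MvPolynomial (Fin n) K) : Prop :=
  cls F < cls G ∨ (cls F = cls G ∧ 0 < cls F ∧ degLv F F < degLv G G)

/-- `F` and `G` have the same rank: neither has lower rank than the other. -/
def rkEQ (F G : MvPolynomial (Fin n) K) : Prop :=
  ¬ rkLT F G ∧ ¬ rkLT G F

/-- `B` has lower rank than `A` (as ascending sets). -/
def ascLT (B A : List (MvPolynomial (Fin n) K)) : Prop :=
  (∃ j, j < min A.length B.length ∧
      (∀ i, i < j → rkEQ (A.getD i 0) (B.getD i 0)) ∧ rkLT (B.getD j 0) (A.getD j 0)) ∨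
    (A.length < B.length ∧ ∀ i, i < A.length → rkEQ (A.getD i 0) (B.getD i 0))

/-- A Ritt characteristic set of the ideal `I`: an ascending set contained in `I`
of minimal rank among all ascending sets contained in `I`. -/
def RittCharSet (I : Ideal (MvPolynomial (Fin n) K)) (A : List (MvPolynomial (Fin n) K)) :
    Prop :=
  AscendingSet A ∧ (∀ a ∈ A, a ∈ I) ∧
    ∀ B : List (MvPolynomial (Fin n) K), AscendingSet B → (∀ b ∈ B, b ∈ I) → ¬ ascLT B A

/-- The saturated ideal of a triangular set, as a set of polynomials. -/
def satTS (L : List (MvPolynomial (Fin n) K)) : Set (MvPolynomial (Fin n) K) :=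
  {F | ∃ q : ℕ, 0 < q ∧ (L.map ini).prod ^ q * F ∈ Ideal.span {T | T ∈ L}}

/-- A regular set: a triangular set such that `res(ini(T_j), [T_1, …, T_{j-1}]) ≠ 0`
for `j = 2, …, r`. -/
def RegularSet (L : List (MvPolynomial (Fin n) K)) : Prop :=
  TriangularSet L ∧
    ∀ j : ℕ, 0 < j → j < L.length → resTS (ini (L.getD j 0)) (L.take j) ≠ 0

/-- A normal triangular set: `deg(ini(T_j), lv(T_i)) = 0` for all `i < j`. -/
def NormalSet (L : List (MvPolynomial (Fin n) K)) : Prop :=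
  TriangularSet L ∧ L.Pairwise fun A B => degLv (ini B) A = 0

/-- The purely lexicographical order on monomials determined by `x_1 < ⋯ < x_n`. -/
def plexLT (a b : Fin n →₀ ℕ) : Prop :=
  ∃ k : Fin n, a k < b k ∧ ∀ j : Fin n, k < j → a j = b j

/-- `m` is the leading monomial of `P` w.r.t. the plex order. -/
def IsLpp (P : MvPolynomial (Fin n) K) (m : Fin n →₀ ℕ) : Prop :=
  m ∈ P.support ∧ ∀ m' ∈ P.support, m' ≠ m → plexLT m' m

/-- `G` is the reduced (Buchberger–)Gröbner basis of the ideal `I` w.r.t. the plex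
term order determined by `x_1 < ⋯ < x_n`: its elements are nonzero monic members of `I`,
the leading monomial of every nonzero member of `I` is divisible by the leading monomial
of some element of `G`, every element of `G` is B-reduced w.r.t. the others, and `G`
generates `I`. -/
def IsReducedGB (I : Ideal (MvPolynomial (Fin n) K)) (G : Finset (MvPolynomial (Fin n) K)) :
    Prop :=
  (∀ g ∈ G, g ∈ I ∧ g ≠ 0 ∧ ∀ m, IsLpp g m → g.coeff m = 1) ∧
    (∀ F ∈ I, F ≠ 0 → ∃ g ∈ G, ∃ mg mF, IsLpp g mg ∧ IsLpp F mF ∧ mg ≤ mF) ∧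
    (∀ g ∈ G, ∀ g' ∈ G, g' ≠ g → ∀ m ∈ g.support, ∀ m', IsLpp g' m' → ¬ m' ≤ m) ∧
    Ideal.span (G : Set (MvPolynomial (Fin n) K)) = I

/-- `Cs` is the W-characteristic set of `I`: the minimal triangular set contained in the
reduced plex Gröbner basis `G` of `I`, i.e. for each class realized in `G`, `Cs` contains
the element of that class whose leading monomial is minimal w.r.t. the plex order, the
elements being ordered by increasing class (equivalently, by the plex order). -/
def IsWCharSet (I : Ideal (MvPolynomial (Fin n) K)) (Cs : List (MvPolynomial (Fin n) K)) :
    Prop :=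
  ∃ G : Finset (MvPolynomial (Fin n) K), IsReducedGB I G ∧
    (Cs.Chain' fun A B => cls A < cls B) ∧
    (∀ c ∈ Cs, c ∈ G) ∧
    (∀ g ∈ G, ∃ c ∈ Cs, cls c = cls g) ∧
    ∀ c ∈ Cs, ∀ g ∈ G, cls g = cls c → g ≠ c →
      ∃ mc mg, IsLpp c mc ∧ IsLpp g mg ∧ plexLT mc mg

/-- The set of common zeros of a set `S` of polynomials over `k`, taken in `Kc ^ n`
for an extension `Kc` of `k`. -/
def zeroSet {k : Type*} [Field k] (Kc : Type*) [CommRing Kc] [Algebra k Kc]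
    (S : Set (MvPolynomial (Fin n) k)) : Set (Fin n → Kc) :=
  {a | ∀ p ∈ S, MvPolynomial.aeval a p = 0}


section P1
variable {n : ℕ} {K : Type*} [Field K]

theorem coeff_coefv (i : Fin n) (d : ℕ) (F : MvPolynomial (Fin n) K) (m : Fin n →₀ ℕ) :
    coeff m (coefv i d F) =
      if m i = 0 then coeff (m + Finsupp.single i d) F else 0 := by
  classical
  unfold coefv
  rw [MvPolynomial.coeff_sum]
  by_cases hm : m i = 0
  · rw [if_pos hm]
    rw [Finset.sum_eq_single (m + Finsupp.single i d)]
    · rw [MvPolynomial.coeff_monomial]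
      have he : Finsupp.erase i (m + Finsupp.single i d) = m := by
        ext j
        by_cases hj : j = i
        · subst hj; simp [Finsupp.erase_same, hm]
        · simp [Finsupp.erase_ne hj, Finsupp.single_apply, Ne.symm hj]
      rw [he, if_pos rfl]
    · intro b hb hbne
      rw [Finset.mem_filter] at hb
      rw [MvPolynomial.coeff_monomial, if_neg]
      intro he
      apply hbne
      have : b = Finsupp.erase i b + Finsupp.single i (b i) := (Finsupp.erase_add_single i b).symm
      rw [this, he, hb.2]
    · intro hnm
      rw [Finset.mem_filter] at hnm
      push_neg at hnm
      by_cases hmem : (m + Finsupp.single i d) ∈ F.support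
      · exact absurd (by simp [hm]) (hnm hmem)
      · rw [MvPolynomial.notMem_support_iff] at hmem
        simp [hmem]
  · rw [if_neg hm]
    apply Finset.sum_eq_zero
    intro b hb
    rw [MvPolynomial.coeff_monomial, if_neg]
    intro he
    apply hm
    rw [← he, Finsupp.erase_same]

end P1
section P2
variable {n : ℕ} {K : Type*} [Field K]

theorem coefv_add (i : Fin n) (d : ℕ) (F G : MvPolynomial (Fin n) K) :
    coefv i d (F + G) = coefv i d F + coefv i d G := by
  ext m
  simp only [coeff_coefv, MvPolynomial.coeff_add]
  split <;> simp

theorem degreeOf_coefv_le (i : Fin n) (d : ℕ) (F : MvPolynomial (Fin n) K) (v : Fin n) :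
    MvPolynomial.degreeOf v (coefv i d F) ≤ MvPolynomial.degreeOf v F := by
  rw [MvPolynomial.degreeOf_le_iff]
  intro m hm
  rw [MvPolynomial.mem_support_iff, coeff_coefv] at hm
  by_cases hmi : m i = 0
  · rw [if_pos hmi] at hm
    have hmem : m + Finsupp.single i d ∈ F.support := MvPolynomial.mem_support_iff.mpr hm
    calc m v ≤ (m + Finsupp.single i d) v := by simp
      _ ≤ MvPolynomial.degreeOf v F := by
          rw [MvPolynomial.degreeOf_eq_sup]; exact Finset.le_sup (f := fun m => m v) hmem
  · rw [if_neg hmi] at hm; exact absurd rfl hm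

theorem degreeOf_coefv_self (i : Fin n) (d : ℕ) (F : MvPolynomial (Fin n) K) :
    MvPolynomial.degreeOf i (coefv i d F) = 0 := by
  rw [Nat.le_zero.symm, MvPolynomial.degreeOf_le_iff]
  intro m hm
  rw [MvPolynomial.mem_support_iff, coeff_coefv] at hm
  by_cases hmi : m i = 0
  · omega
  · rw [if_neg hmi] at hm; exact absurd rfl hm

theorem coefv_eq_zero_of_lt {i : Fin n} {d : ℕ} {F : MvPolynomial (Fin n) K}
    (h : MvPolynomial.degreeOf i F < d) : coefv i d F = 0 := by
  ext m
  rw [coeff_coefv, MvPolynomial.coeff_zero]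
  by_cases hmi : m i = 0
  · rw [if_pos hmi]
    by_contra hc
    have hmem : m + Finsupp.single i d ∈ F.support := MvPolynomial.mem_support_iff.mpr hc
    have : (m + Finsupp.single i d) i ≤ MvPolynomial.degreeOf i F := by
      rw [MvPolynomial.degreeOf_eq_sup]; exact Finset.le_sup (f := fun m => m i) hmem
    simp [hmi] at this
    omega
  · rw [if_neg hmi]

theorem lcv_ne_zero {i : Fin n} {F : MvPolynomial (Fin n) K} (hF : F ≠ 0) :
    lcv i F ≠ 0 := by
  obtain ⟨m, hm, hsup⟩ := Finset.exists_mem_eq_sup F.support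
    (MvPolynomial.support_nonempty.mpr hF) (fun m => m i)
  intro hc
  have h0 : coeff (Finsupp.erase i m) (lcv i F) = 0 := by rw [hc]; simp
  rw [lcv, coeff_coefv, if_pos (Finsupp.erase_same ..)] at h0
  rw [MvPolynomial.degreeOf_eq_sup, hsup] at h0
  rw [Finsupp.erase_add_single] at h0
  exact MvPolynomial.mem_support_iff.mp hm h0

theorem coefv_zero_of_degreeOf_eq_zero {i : Fin n} {p : MvPolynomial (Fin n) K}
    (h : MvPolynomial.degreeOf i p = 0) : coefv i 0 p = p := by
  ext m
  rw [coeff_coefv]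
  by_cases hmi : m i = 0
  · rw [if_pos hmi]; simp
  · rw [if_neg hmi]
    symm
    rw [← MvPolynomial.notMem_support_iff]
    intro hmem
    have : m i ≤ MvPolynomial.degreeOf i p := by
      rw [MvPolynomial.degreeOf_eq_sup]; exact Finset.le_sup (f := fun m => m i) hmem
    omega

end P2
section P3
variable {n : ℕ} {K : Type*} [Field K]

/-- View `F` as a univariate polynomial in `x_i` with mv-polynomial coefficients. -/
noncomputable def toPoly (i : Fin n) :
    MvPolynomial (Fin n) K →+* Polynomial (MvPolynomial (Fin n) K) :=
  MvPolynomial.eval₂Hom (Polynomial.C.comp MvPolynomial.C)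
    (fun j => if j = i then Polynomial.X else Polynomial.C (MvPolynomial.X j))

theorem coefv_monomial (i : Fin n) (d : ℕ) (m : Fin n →₀ ℕ) (c : K) :
    coefv i d (monomial m c) =
      if m i = d then monomial (Finsupp.erase i m) c else 0 := by
  ext m'
  rw [coeff_coefv]
  by_cases hmi : m' i = 0
  · rw [if_pos hmi, MvPolynomial.coeff_monomial]
    by_cases hd : m i = d
    · rw [if_pos hd, MvPolynomial.coeff_monomial]
      congr 1
      simp only [eq_iff_iff]
      constructor
      · intro he
        rw [he]
        ext j
        by_cases hj : j = i
        · subst hj; simp [Finsupp.erase_same, hmi]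
        · simp [Finsupp.erase_ne hj, Finsupp.single_apply, Ne.symm hj]
      · intro he
        rw [← he, ← hd, Finsupp.erase_add_single]
    · rw [if_neg hd, if_neg, MvPolynomial.coeff_zero]
      intro he
      apply hd
      rw [he]
      simp [hmi]
  · rw [if_neg hmi]
    by_cases hd : m i = d
    · rw [if_pos hd, MvPolynomial.coeff_monomial, if_neg]
      intro he
      apply hmi
      rw [← he, Finsupp.erase_same]
    · rw [if_neg hd, MvPolynomial.coeff_zero]

theorem toPoly_monomial (i : Fin n) (m : Fin n →₀ ℕ) (c : K) :
    toPoly i (monomial m c) =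
      Polynomial.C (monomial (Finsupp.erase i m) c) * Polynomial.X ^ (m i) := by
  classical
  rw [toPoly, MvPolynomial.coe_eval₂Hom, MvPolynomial.eval₂_monomial]
  have hm : m = Finsupp.erase i m + Finsupp.single i (m i) := (Finsupp.erase_add_single i m).symm
  rw [show (m.prod fun j e => (if j = i then Polynomial.X else Polynomial.C (MvPolynomial.X j)) ^ e)
      = ((Finsupp.erase i m).prod fun j e =>
          (if j = i then Polynomial.X else Polynomial.C (MvPolynomial.X j)) ^ e) *
        ((Finsupp.single i (m i)).prod fun j e =>
          (if j = i then Polynomial.X else Polynomial.C (MvPolynomial.X j)) ^ e) by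
    rw [← Finsupp.prod_add_index (by intros; simp) (by intros; exact pow_add _ _ _),
        Finsupp.erase_add_single]]
  have h1 : ((Finsupp.erase i m).prod fun j e =>
      (if j = i then Polynomial.X else Polynomial.C (MvPolynomial.X j)) ^ e)
      = Polynomial.C ((Finsupp.erase i m).prod fun j e => (MvPolynomial.X j : MvPolynomial (Fin n) K) ^ e) := by
    rw [Finsupp.prod, Finsupp.prod, map_prod]
    apply Finset.prod_congr rfl
    intro j hj
    have hji : j ≠ i := by
      intro h; subst h; exact absurd (Finsupp.erase_same ..) (Finsupp.mem_support_iff.mp hj)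
    rw [if_neg hji, map_pow]
  have h2 : ((Finsupp.single i (m i)).prod fun j e =>
      (if j = i then Polynomial.X else Polynomial.C (MvPolynomial.X j)) ^ e)
      = (Polynomial.X : Polynomial (MvPolynomial (Fin n) K)) ^ (m i) := by
    by_cases h0 : m i = 0
    · simp [h0]
    · rw [Finsupp.prod, Finsupp.support_single_ne_zero i h0, Finset.prod_singleton,
        Finsupp.single_eq_same, if_pos rfl]
  rw [h1, h2, MvPolynomial.monomial_eq, map_mul, RingHom.comp_apply]
  ring

theorem coeff_toPoly (i : Fin n) (F : MvPolynomial (Fin n) K) (d : ℕ) :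
    (toPoly i F).coeff d = coefv i d F := by
  induction F using MvPolynomial.induction_on' with
  | monomial m c =>
    rw [toPoly_monomial, coefv_monomial, mul_comm, Polynomial.coeff_X_pow_mul']
    by_cases h : m i ≤ d
    · rw [if_pos h, Polynomial.coeff_C]
      rcases eq_or_ne (m i) d with he | hne
      · simp [he]
      · rw [if_neg (by omega), if_neg hne]
    · rw [if_neg h, if_neg (by omega)]
  | add p q hp hq =>
    rw [map_add, Polynomial.coeff_add, hp, hq, coefv_add]

theorem toPoly_ne_zero {i : Fin n} {F : MvPolynomial (Fin n) K} (hF : F ≠ 0) :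
    toPoly i F ≠ 0 := by
  intro hc
  apply lcv_ne_zero hF (i := i)
  rw [lcv, ← coeff_toPoly, hc, Polynomial.coeff_zero]

theorem natDegree_toPoly (i : Fin n) (F : MvPolynomial (Fin n) K) :
    (toPoly i F).natDegree = MvPolynomial.degreeOf i F := by
  rcases eq_or_ne F 0 with rfl | hF
  · simp [MvPolynomial.degreeOf_zero]
  · apply le_antisymm
    · rw [Polynomial.natDegree_le_iff_coeff_eq_zero]
      intro N hN
      rw [coeff_toPoly]
      exact coefv_eq_zero_of_lt hN
    · apply Polynomial.le_natDegree_of_ne_zero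
      rw [coeff_toPoly]
      have h := lcv_ne_zero (i := i) hF
      rw [lcv] at h
      exact h

theorem toPoly_C_of_degreeOf_eq_zero {i : Fin n} {p : MvPolynomial (Fin n) K}
    (h : MvPolynomial.degreeOf i p = 0) : toPoly i p = Polynomial.C p := by
  ext d
  rw [coeff_toPoly, Polynomial.coeff_C]
  rcases eq_or_ne d 0 with rfl | hd
  · rw [if_pos rfl, coefv_zero_of_degreeOf_eq_zero h]
  · rw [if_neg hd]
    rw [coefv_eq_zero_of_lt (F := p) (i := i) (by rw [h]; exact Nat.pos_of_ne_zero hd)]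

theorem toPoly_X_self (i : Fin n) :
    toPoly i (MvPolynomial.X i) = (Polynomial.X : Polynomial (MvPolynomial (Fin n) K)) := by
  rw [toPoly, MvPolynomial.coe_eval₂Hom, MvPolynomial.eval₂_X, if_pos rfl]

end P3
section P4
variable {n : ℕ} {K : Type*} [Field K]

theorem degreeOf_neg' (v : Fin n) (p : MvPolynomial (Fin n) K) :
    MvPolynomial.degreeOf v (-p) = MvPolynomial.degreeOf v p := by
  rw [MvPolynomial.degreeOf_eq_sup, MvPolynomial.degreeOf_eq_sup, MvPolynomial.support_neg]

theorem degreeOf_sub_le' (v : Fin n) (p q : MvPolynomial (Fin n) K) :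
    MvPolynomial.degreeOf v (p - q) ≤
      max (MvPolynomial.degreeOf v p) (MvPolynomial.degreeOf v q) := by
  rw [sub_eq_add_neg]
  calc MvPolynomial.degreeOf v (p + -q) ≤ _ := MvPolynomial.degreeOf_add_le v p (-q)
    _ = _ := by rw [degreeOf_neg' v q]

theorem degreeOf_pow_le' (v : Fin n) (p : MvPolynomial (Fin n) K) (k : ℕ) :
    MvPolynomial.degreeOf v (p ^ k) ≤ k * MvPolynomial.degreeOf v p := by
  induction k with
  | zero =>
    rw [pow_zero, show (1 : MvPolynomial (Fin n) K) = MvPolynomial.C 1 by simp,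
      MvPolynomial.degreeOf_C]
    omega
  | succ k ih =>
    rw [pow_succ]
    calc MvPolynomial.degreeOf v (p ^ k * p)
        ≤ MvPolynomial.degreeOf v (p ^ k) + MvPolynomial.degreeOf v p :=
          MvPolynomial.degreeOf_mul_le v _ p
      _ ≤ k * MvPolynomial.degreeOf v p + MvPolynomial.degreeOf v p := by omega
      _ = (k + 1) * MvPolynomial.degreeOf v p := by ring

/-- The fundamental identity of pseudo-division (auxiliary version). -/
theorem pdivAux_spec (i : Fin n) (F : MvPolynomial (Fin n) K) (q : ℕ)
    (QR : MvPolynomial (Fin n) K × MvPolynomial (Fin n) K) :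
    (pdivAux i F q QR).1 * F + (pdivAux i F q QR).2 =
      lcv i F ^ q * (QR.1 * F + QR.2) := by
  induction q generalizing QR with
  | zero => simp [pdivAux]
  | succ q ih =>
    rw [pdivAux]
    split
    · simp only
      ring
    · rw [ih]
      simp only
      ring

/-- The key degree-decreasing step of pseudo-division. -/
theorem step_degree_lt {i : Fin n} {F R : MvPolynomial (Fin n) K}
    (hF : 0 < MvPolynomial.degreeOf i F)
    (hle : MvPolynomial.degreeOf i F ≤ MvPolynomial.degreeOf i R) :
    MvPolynomial.degreeOf i
      (lcv i F * R - coefv i (MvPolynomial.degreeOf i R) R *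
        MvPolynomial.X i ^ (MvPolynomial.degreeOf i R - MvPolynomial.degreeOf i F) * F)
      < MvPolynomial.degreeOf i R := by
  set dF := MvPolynomial.degreeOf i F with hdF
  set dR := MvPolynomial.degreeOf i R with hdR
  have hdR0 : 0 < dR := lt_of_lt_of_le hF hle
  have hFne : F ≠ 0 := by
    intro h; rw [hdF, h] at hF; simp at hF
  have hRne : R ≠ 0 := by
    intro h; rw [hdR, h] at hdR0; simp at hdR0
  set R2 := lcv i F * R - coefv i dR R * MvPolynomial.X i ^ (dR - dF) * F with hR2
  rcases eq_or_ne R2 0 with h0 | hne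
  · rw [h0]; simpa using hdR0
  · rw [← natDegree_toPoly i R2]
    have hC1 : toPoly i (lcv i F) = Polynomial.C (lcv i F) :=
      toPoly_C_of_degreeOf_eq_zero (degreeOf_coefv_self i _ F)
    have hC2 : toPoly i (coefv i dR R) = Polynomial.C (coefv i dR R) :=
      toPoly_C_of_degreeOf_eq_zero (degreeOf_coefv_self i _ R)
    have hmap : toPoly i R2 =
        Polynomial.C (lcv i F) * toPoly i R -
          Polynomial.C (coefv i dR R) * Polynomial.X ^ (dR - dF) * toPoly i F := by
      rw [hR2, map_sub, map_mul, map_mul, map_mul, map_pow, toPoly_X_self, hC1, hC2]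
    set f := toPoly i F with hf
    set r := toPoly i R with hr
    have hfd : f.natDegree = dF := natDegree_toPoly i F
    have hrd : r.natDegree = dR := natDegree_toPoly i R
    have hfne : f ≠ 0 := toPoly_ne_zero hFne
    have hrne : r ≠ 0 := toPoly_ne_zero hRne
    have hlcF : lcv i F = f.leadingCoeff := by
      rw [Polynomial.leadingCoeff, hfd, coeff_toPoly]; rfl
    have hlcR : coefv i dR R = r.leadingCoeff := by
      rw [Polynomial.leadingCoeff, hrd, coeff_toPoly]
    have hane : f.leadingCoeff ≠ 0 := Polynomial.leadingCoeff_ne_zero.mpr hfne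
    have hcne : r.leadingCoeff ≠ 0 := Polynomial.leadingCoeff_ne_zero.mpr hrne
    have hdeg : (Polynomial.C (lcv i F) * r).degree =
        (Polynomial.C (coefv i dR R) * Polynomial.X ^ (dR - dF) * f).degree := by
      rw [hlcF, hlcR]
      rw [Polynomial.degree_C_mul (by exact hane), mul_assoc,
        Polynomial.degree_C_mul (by exact hcne), Polynomial.degree_mul,
        Polynomial.degree_X_pow,
        Polynomial.degree_eq_natDegree hfne, Polynomial.degree_eq_natDegree hrne,
        hfd, hrd]
      rw [← Nat.cast_add]
      congr 1
      omega
    have hlc : (Polynomial.C (lcv i F) * r).leadingCoeff =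
        (Polynomial.C (coefv i dR R) * Polynomial.X ^ (dR - dF) * f).leadingCoeff := by
      rw [hlcF, hlcR, Polynomial.leadingCoeff_mul, Polynomial.leadingCoeff_mul,
        Polynomial.leadingCoeff_mul, Polynomial.leadingCoeff_C,
        Polynomial.leadingCoeff_C, Polynomial.leadingCoeff_X_pow]
      ring
    have hne1 : Polynomial.C (lcv i F) * r ≠ 0 := by
      apply mul_ne_zero _ hrne
      rw [Ne, Polynomial.C_eq_zero]
      exact lcv_ne_zero hFne
    have := Polynomial.degree_sub_lt hdeg hne1 hlc
    rw [← hmap] at this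
    have hddeg : (Polynomial.C (lcv i F) * r).degree = (dR : WithBot ℕ) := by
      rw [hlcF, Polynomial.degree_C_mul (by exact hane),
        Polynomial.degree_eq_natDegree hrne, hrd]
    rw [hddeg] at this
    exact (Polynomial.natDegree_lt_iff_degree_lt (toPoly_ne_zero hne)).mpr this

end P4
section P5
variable {n : ℕ} {K : Type*} [Field K]

theorem degreeOf_eq_zero_of_not_mem_vars {v : Fin n} {F : MvPolynomial (Fin n) K}
    (hv : v ∉ F.vars) : MvPolynomial.degreeOf v F = 0 := by
  rw [← Nat.le_zero, MvPolynomial.degreeOf_le_iff]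
  intro m hm
  by_contra hc
  exact hv ((MvPolynomial.mem_vars v).mpr ⟨m, hm, Finsupp.mem_support_iff.mpr (by omega)⟩)

theorem degreeOf_pos_of_mem_vars {v : Fin n} {F : MvPolynomial (Fin n) K}
    (hv : v ∈ F.vars) : 0 < MvPolynomial.degreeOf v F := by
  rcases Nat.eq_zero_or_pos (MvPolynomial.degreeOf v F) with h0 | h0
  · exfalso
    rw [MvPolynomial.mem_vars] at hv
    obtain ⟨m, hm, him⟩ := hv
    have : m v ≤ MvPolynomial.degreeOf v F := by
      rw [MvPolynomial.degreeOf_eq_sup]; exact Finset.le_sup (f := fun m => m v) hm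
    rw [h0, Nat.le_zero] at this
    rw [Finsupp.mem_support_iff] at him
    exact him this
  · exact h0

theorem pdivAux_deg (i : Fin n) (F : MvPolynomial (Fin n) K)
    (hF : 0 < MvPolynomial.degreeOf i F) :
    ∀ (q : ℕ) (QR : MvPolynomial (Fin n) K × MvPolynomial (Fin n) K),
      MvPolynomial.degreeOf i QR.2 < MvPolynomial.degreeOf i F + q →
      MvPolynomial.degreeOf i (pdivAux i F q QR).2 < MvPolynomial.degreeOf i F := by
  intro q
  induction q with
  | zero => intro QR h; rw [pdivAux]; simpa using h
  | succ q ih =>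
    intro QR h
    rw [pdivAux]
    split
    · rename_i hlt
      simp only
      calc MvPolynomial.degreeOf i (lcv i F ^ (q + 1) * QR.2)
          ≤ MvPolynomial.degreeOf i (lcv i F ^ (q + 1)) + MvPolynomial.degreeOf i QR.2 :=
            MvPolynomial.degreeOf_mul_le i _ _
        _ ≤ (q + 1) * MvPolynomial.degreeOf i (lcv i F) + MvPolynomial.degreeOf i QR.2 := by
            have := degreeOf_pow_le' i (lcv i F) (q + 1); omega
        _ < MvPolynomial.degreeOf i F := by
            have h0 : MvPolynomial.degreeOf i (lcv i F) = 0 := degreeOf_coefv_self i _ F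
            rw [h0]; omega
    · rename_i hge
      push_neg at hge
      apply ih
      simp only
      have hstep := step_degree_lt hF hge
      omega

theorem pdivAux_deg_other (i v : Fin n) (F : MvPolynomial (Fin n) K)
    (hv : v ≠ i) (h0 : MvPolynomial.degreeOf v F = 0) :
    ∀ (q : ℕ) (QR : MvPolynomial (Fin n) K × MvPolynomial (Fin n) K),
      MvPolynomial.degreeOf v (pdivAux i F q QR).2 ≤ MvPolynomial.degreeOf v QR.2 := by
  intro q
  have hlcv : ∀ d, MvPolynomial.degreeOf v (coefv i d F) = 0 := fun d =>
    Nat.le_zero.mp (h0 ▸ degreeOf_coefv_le i d F v)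
  have hX : MvPolynomial.degreeOf v (MvPolynomial.X i : MvPolynomial (Fin n) K) = 0 := by
    rw [MvPolynomial.degreeOf_X, if_neg hv]
  induction q with
  | zero => intro QR; rw [pdivAux]
  | succ q ih =>
    intro QR
    rw [pdivAux]
    split
    · simp only
      calc MvPolynomial.degreeOf v (lcv i F ^ (q + 1) * QR.2)
          ≤ MvPolynomial.degreeOf v (lcv i F ^ (q + 1)) + MvPolynomial.degreeOf v QR.2 :=
            MvPolynomial.degreeOf_mul_le v _ _
        _ ≤ MvPolynomial.degreeOf v QR.2 := by
            have h1 := degreeOf_pow_le' v (lcv i F) (q + 1)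
            have h2 : MvPolynomial.degreeOf v (lcv i F) = 0 := hlcv _
            rw [h2, Nat.mul_zero] at h1
            omega
    · refine le_trans (ih _) ?_
      simp only
      set dR := MvPolynomial.degreeOf i QR.2
      set e := dR - MvPolynomial.degreeOf i F
      have hc : MvPolynomial.degreeOf v (coefv i dR QR.2) ≤ MvPolynomial.degreeOf v QR.2 :=
        degreeOf_coefv_le i dR QR.2 v
      have hXe : MvPolynomial.degreeOf v ((MvPolynomial.X i : MvPolynomial (Fin n) K) ^ e) = 0 := by
        have := degreeOf_pow_le' v (MvPolynomial.X i : MvPolynomial (Fin n) K) e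
        rw [hX, Nat.mul_zero] at this; omega
      have h1 : MvPolynomial.degreeOf v (lcv i F * QR.2) ≤ MvPolynomial.degreeOf v QR.2 := by
        have := MvPolynomial.degreeOf_mul_le v (lcv i F) QR.2
        have h2 : MvPolynomial.degreeOf v (lcv i F) = 0 := hlcv _
        omega
      have h2 : MvPolynomial.degreeOf v
          (coefv i dR QR.2 * MvPolynomial.X i ^ e * F) ≤ MvPolynomial.degreeOf v QR.2 := by
        have ha := MvPolynomial.degreeOf_mul_le v (coefv i dR QR.2 * MvPolynomial.X i ^ e) F
        have hb := MvPolynomial.degreeOf_mul_le v (coefv i dR QR.2) (MvPolynomial.X i ^ e)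
        omega
      have := degreeOf_sub_le' v (lcv i F * QR.2)
        (coefv i dR QR.2 * MvPolynomial.X i ^ e * F)
      omega

theorem premLv_mem (G F : MvPolynomial (Fin n) K) :
    premLv G F ∈ Ideal.span ({G, F} : Set (MvPolynomial (Fin n) K)) := by
  rw [premLv]
  split
  · rename_i h
    set i := F.vars.max' h
    have hsp := pdivAux_spec i F (MvPolynomial.degreeOf i G + 1 - MvPolynomial.degreeOf i F)
      (0, G)
    simp only [zero_mul, zero_add] at hsp
    rw [prem]
    have : (pdivAux i F (MvPolynomial.degreeOf i G + 1 - MvPolynomial.degreeOf i F) (0, G)).2 =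
        lcv i F ^ (MvPolynomial.degreeOf i G + 1 - MvPolynomial.degreeOf i F) * G -
        (pdivAux i F (MvPolynomial.degreeOf i G + 1 - MvPolynomial.degreeOf i F) (0, G)).1 * F := by
      rw [← hsp]; ring
    rw [this]
    apply Ideal.sub_mem
    · exact Ideal.mul_mem_left _ _ (Ideal.subset_span (by simp))
    · exact Ideal.mul_mem_left _ _ (Ideal.subset_span (by simp))
  · exact Ideal.zero_mem _

theorem degreeOf_premLv_lt (G F : MvPolynomial (Fin n) K) (h : F.vars.Nonempty) :
    MvPolynomial.degreeOf (F.vars.max' h) (premLv G F) <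
      MvPolynomial.degreeOf (F.vars.max' h) F := by
  set i := F.vars.max' h with hi
  have hF : 0 < MvPolynomial.degreeOf i F := degreeOf_pos_of_mem_vars (F.vars.max'_mem h)
  rw [premLv, dif_pos h, prem, ← hi]
  apply pdivAux_deg i F hF
  simp only
  omega

theorem degreeOf_premLv_le_other (G F : MvPolynomial (Fin n) K) (v : Fin n)
    (hv : v ∉ F.vars) :
    MvPolynomial.degreeOf v (premLv G F) ≤ MvPolynomial.degreeOf v G := by
  rw [premLv]
  split
  · rename_i h
    have hvi : v ≠ F.vars.max' h := fun hc => hv (hc ▸ F.vars.max'_mem h)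
    have h0 : MvPolynomial.degreeOf v F = 0 := degreeOf_eq_zero_of_not_mem_vars hv
    rw [prem]
    exact pdivAux_deg_other _ v F hvi h0 _ _
  · simp

theorem premLv_of_reduced {G F : MvPolynomial (Fin n) K} (h : F.vars.Nonempty)
    (hred : MvPolynomial.degreeOf (F.vars.max' h) G <
      MvPolynomial.degreeOf (F.vars.max' h) F) :
    premLv G F = G := by
  rw [premLv, dif_pos h, prem, Nat.sub_eq_zero_of_le (by omega), pdivAux]

end P5
section P6
variable {n : ℕ} {K : Type*} [Field K]

theorem cls_eq_max' {P : MvPolynomial (Fin n) K} (h : P.vars.Nonempty) :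
    cls P = (P.vars.max' h : ℕ) + 1 := by
  rw [cls]
  apply le_antisymm
  · apply Finset.sup_le
    intro w hw
    have : (w : ℕ) ≤ (P.vars.max' h : ℕ) := Finset.le_max' _ w hw
    omega
  · apply Finset.le_sup (f := fun i : Fin n => (i : ℕ) + 1)
    exact P.vars.max'_mem h

theorem cls_pos_iff {P : MvPolynomial (Fin n) K} : 0 < cls P ↔ P.vars.Nonempty := by
  constructor
  · intro h
    by_contra hc
    rw [Finset.not_nonempty_iff_eq_empty] at hc
    rw [cls, hc] at h
    simp at h
  · intro h
    rw [cls_eq_max' h]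
    omega

theorem cls_eq_zero_iff {P : MvPolynomial (Fin n) K} : cls P = 0 ↔ P.vars = ∅ := by
  rw [← Finset.not_nonempty_iff_eq_empty, ← cls_pos_iff]
  omega

theorem eq_C_of_vars_eq_empty {P : MvPolynomial (Fin n) K} (h : P.vars = ∅) :
    P = MvPolynomial.C (MvPolynomial.coeff 0 P) := by
  ext m
  rcases eq_or_ne m 0 with rfl | hm
  · simp
  · rw [MvPolynomial.coeff_C, if_neg (Ne.symm hm)]
    rw [← MvPolynomial.notMem_support_iff]
    intro hmem
    obtain ⟨j, hj⟩ := Finsupp.support_nonempty_iff.mpr hm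
    have : j ∈ P.vars := (MvPolynomial.mem_vars j).mpr ⟨m, hmem, hj⟩
    rw [h] at this
    exact absurd this (Finset.notMem_empty j)

theorem lv_not_mem_of_cls_lt {A B : MvPolynomial (Fin n) K} (h : cls A < cls B)
    (hB : B.vars.Nonempty) : B.vars.max' hB ∉ A.vars := by
  intro hc
  have h1 : ((B.vars.max' hB : Fin n) : ℕ) + 1 ≤ cls A := by
    rw [cls]
    apply Finset.le_sup (f := fun i : Fin n => (i : ℕ) + 1)
    exact hc
  rw [cls_eq_max' hB] at h
  omega

theorem lv_eq_of_cls_eq {A B : MvPolynomial (Fin n) K} (h : cls A = cls B)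
    (hA : A.vars.Nonempty) (hB : B.vars.Nonempty) :
    A.vars.max' hA = B.vars.max' hB := by
  rw [cls_eq_max' hA, cls_eq_max' hB] at h
  exact Fin.ext (by omega)

theorem degLv_self_pos {P : MvPolynomial (Fin n) K} (h : P.vars.Nonempty) :
    0 < degLv P P := by
  rw [degLv, dif_pos h]
  exact degreeOf_pos_of_mem_vars (P.vars.max'_mem h)

theorem RReduced_of_cls_lt {F G : MvPolynomial (Fin n) K} (h : cls F < cls G) :
    RReduced F G := by
  have hG : G.vars.Nonempty := cls_pos_iff.mp (by omega)
  rw [RReduced, degLv, degLv, dif_pos hG, dif_pos hG,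
    degreeOf_eq_zero_of_not_mem_vars (lv_not_mem_of_cls_lt h hG)]
  exact degreeOf_pos_of_mem_vars (G.vars.max'_mem hG)

theorem rkEQ_refl (F : MvPolynomial (Fin n) K) : rkEQ F F := by
  constructor <;> · rw [rkLT]; omega

theorem rkEQ_spec {F G : MvPolynomial (Fin n) K} (h : rkEQ F G) :
    cls F = cls G ∧ (0 < cls F → degLv F F = degLv G G) := by
  obtain ⟨h1, h2⟩ := h
  rw [rkLT] at h1 h2
  push_neg at h1 h2
  constructor
  · omega
  · intro hpos
    have e1 := h1.2
    have e2 := h2.2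
    omega

@[simp] theorem premTS_nil (F : MvPolynomial (Fin n) K) : premTS F [] = F := rfl

@[simp] theorem premTS_cons (F T : MvPolynomial (Fin n) K)
    (L : List (MvPolynomial (Fin n) K)) :
    premTS F (T :: L) = premLv (premTS F L) T := rfl

theorem premTS_mem {I : Ideal (MvPolynomial (Fin n) K)} {F : MvPolynomial (Fin n) K}
    {L : List (MvPolynomial (Fin n) K)} (hF : F ∈ I) (hL : ∀ T ∈ L, T ∈ I) :
    premTS F L ∈ I := by
  induction L with
  | nil => simpa using hF
  | cons T L ih =>
    rw [premTS_cons]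
    have h1 : premTS F L ∈ I := ih (fun T' hT' => hL T' (List.mem_cons_of_mem T hT'))
    have h2 : Ideal.span ({premTS F L, T} : Set (MvPolynomial (Fin n) K)) ≤ I := by
      rw [Ideal.span_le]
      intro x hx
      rcases hx with rfl | hx
      · exact h1
      · rw [Set.mem_singleton_iff] at hx
        exact hx ▸ hL T (List.mem_cons_self)
    exact h2 (premLv_mem _ _)

theorem premTS_reduced {F : MvPolynomial (Fin n) K} {L : List (MvPolynomial (Fin n) K)}
    (hvars : ∀ T ∈ L, 0 < cls T) (hpair : L.Pairwise fun A B => cls A < cls B) :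
    ∀ T ∈ L, RReduced (premTS F L) T := by
  induction L generalizing F with
  | nil => intro T hT; simp at hT
  | cons A L ih =>
    intro T hT
    rw [premTS_cons]
    rw [List.pairwise_cons] at hpair
    rcases List.mem_cons.mp hT with rfl | hT
    · have hA : T.vars.Nonempty := cls_pos_iff.mp (hvars T (List.mem_cons_self))
      rw [RReduced, degLv, degLv, dif_pos hA, dif_pos hA]
      exact degreeOf_premLv_lt _ _ hA
    · have hT0 : 0 < cls T := hvars T (List.mem_cons_of_mem A hT)
      have hTv : T.vars.Nonempty := cls_pos_iff.mp hT0
      have hlt : cls A < cls T := hpair.1 T hT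
      have hnm : T.vars.max' hTv ∉ A.vars := lv_not_mem_of_cls_lt hlt hTv
      have hred := ih (F := F) (fun T' hT' => hvars T' (List.mem_cons_of_mem A hT')) hpair.2 T hT
      rw [RReduced, degLv, degLv, dif_pos hTv, dif_pos hTv] at hred ⊢
      calc MvPolynomial.degreeOf (T.vars.max' hTv) (premLv (premTS F L) A)
          ≤ MvPolynomial.degreeOf (T.vars.max' hTv) (premTS F L) :=
            degreeOf_premLv_le_other _ _ _ hnm
        _ < _ := hred

theorem premTS_of_reduced {G : MvPolynomial (Fin n) K} {L : List (MvPolynomial (Fin n) K)}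
    (hvars : ∀ T ∈ L, 0 < cls T) (hred : ∀ T ∈ L, RReduced G T) :
    premTS G L = G := by
  induction L with
  | nil => rfl
  | cons A L ih =>
    rw [premTS_cons, ih (fun T hT => hvars T (List.mem_cons_of_mem A hT))
      (fun T hT => hred T (List.mem_cons_of_mem A hT))]
    have hA : A.vars.Nonempty := cls_pos_iff.mp (hvars A (List.mem_cons_self))
    have h := hred A (List.mem_cons_self)
    rw [RReduced, degLv, degLv, dif_pos hA, dif_pos hA] at h
    exact premLv_of_reduced hA h

end P6
section P7
variable {n : ℕ} {K : Type*} [Field K]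

theorem getD_mem' {X : Type*} {l : List X} {i : ℕ} (h : i < l.length) (d : X) :
    l.getD i d ∈ l := by
  rw [List.getD_eq_getElem _ _ h]
  exact List.getElem_mem h

theorem getD_append_left' {X : Type*} (l l2 : List X) (i : ℕ) (h : i < l.length) (d : X) :
    (l ++ l2).getD i d = l.getD i d := by
  rw [List.getD_eq_getElem _ _ (by rw [List.length_append]; omega),
    List.getD_eq_getElem _ _ h, List.getElem_append_left]

theorem getD_snoc_self {X : Type*} (l : List X) (x d : X) :
    (l ++ [x]).getD l.length d = x := by
  rw [List.getD_eq_getElem _ _ (by simp)]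
  simp

theorem RReduced_of_rkLT {W T : MvPolynomial (Fin n) K} (hT : 0 < cls T)
    (h : rkLT W T) : RReduced W T := by
  rcases h with h | ⟨hc, hw, hd⟩
  · exact RReduced_of_cls_lt h
  · have hTv : T.vars.Nonempty := cls_pos_iff.mp hT
    have hWv : W.vars.Nonempty := cls_pos_iff.mp hw
    have hlv := lv_eq_of_cls_eq hc hWv hTv
    rw [RReduced, degLv, degLv, dif_pos hTv, dif_pos hTv]
    rw [degLv, degLv, dif_pos hWv, dif_pos hTv, hlv] at hd
    exact hd

theorem RReduced_congr {W X Y : MvPolynomial (Fin n) K} (h : rkEQ X Y) (h0 : 0 < cls X)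
    (hr : RReduced W Y) : RReduced W X := by
  obtain ⟨hcls, hdeg⟩ := rkEQ_spec h
  have hXv : X.vars.Nonempty := cls_pos_iff.mp h0
  have hYv : Y.vars.Nonempty := cls_pos_iff.mp (by omega)
  have hlv := lv_eq_of_cls_eq hcls hXv hYv
  rw [RReduced, degLv, degLv, dif_pos hYv, dif_pos hYv, ← hlv] at hr
  rw [RReduced, degLv, degLv, dif_pos hXv, dif_pos hXv]
  have := hdeg h0
  rw [degLv, degLv, dif_pos hXv, dif_pos hYv, ← hlv] at this
  omega

theorem cls_lt_of_reduced_not_rkLT {R T : MvPolynomial (Fin n) K} (h0 : 0 < cls R)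
    (hT : 0 < cls T) (hred : RReduced R T) (hn : ¬ rkLT R T) : cls T < cls R := by
  rw [rkLT] at hn
  push_neg at hn
  rcases lt_trichotomy (cls R) (cls T) with h | h | h
  · exact absurd h (by omega)
  · exfalso
    have hTv : T.vars.Nonempty := cls_pos_iff.mp hT
    have hRv : R.vars.Nonempty := cls_pos_iff.mp h0
    have hlv := lv_eq_of_cls_eq h hRv hTv
    rw [RReduced, degLv, degLv, dif_pos hTv, dif_pos hTv] at hred
    have h2 := hn.2 h h0
    rw [degLv, degLv, dif_pos hRv, dif_pos hTv, hlv] at h2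
    omega
  · exact h

end P7

/-- Lemma on Ritt characteristic sets. Let `P` be a finite nonempty set of
nonzero polynomials and `A` an ascending set contained in `⟨P⟩`. Then `A` is a Ritt
characteristic set of `⟨P⟩` iff `prem(F, A) = 0` for all `F ∈ ⟨P⟩`. -/
theorem statement0 {n : ℕ} {K : Type*} [Field K]
    (P : Finset (MvPolynomial (Fin n) K)) (hne : P.Nonempty) (h0 : ∀ p ∈ P, p ≠ 0)
    (A : List (MvPolynomial (Fin n) K)) (hA : AscendingSet A)
    (hAI : ∀ a ∈ A, a ∈ Ideal.span (P : Set (MvPolynomial (Fin n) K))) :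
    RittCharSet (Ideal.span (P : Set (MvPolynomial (Fin n) K))) A ↔
      ∀ F ∈ Ideal.span (P : Set (MvPolynomial (Fin n) K)), premTS F A = 0 := by
  classical
  set I := Ideal.span (P : Set (MvPolynomial (Fin n) K)) with hIdef
  haveI instT : IsTrans (MvPolynomial (Fin n) K) (fun X Y => cls X < cls Y) :=
    ⟨fun _ _ _ => Nat.lt_trans⟩
  rcases hA with ⟨a, ha0, hAeq⟩ | ⟨⟨hAne, hAcls, hAchain⟩, hpred⟩
  · -- A = [C a] : both sides hold
    subst hAeq
    have hca : cls (MvPolynomial.C a : MvPolynomial (Fin n) K) = 0 :=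
      cls_eq_zero_iff.mpr MvPolynomial.vars_C
    constructor
    · intro _ F hF
      rw [premTS_cons, premTS_nil, premLv, dif_neg]
      rw [MvPolynomial.vars_C]
      simp
    · intro _
      refine ⟨Or.inl ⟨a, ha0, rfl⟩, hAI, ?_⟩
      intro B hB hBI hlt
      rcases hlt with ⟨j, hj, _, hrk⟩ | ⟨hlen, heq⟩
      · have hj0 : j = 0 := by simp at hj; omega
        subst hj0
        have : ([MvPolynomial.C a] : List (MvPolynomial (Fin n) K)).getD 0 0 =
            MvPolynomial.C a := rfl
        rw [this] at hrk
        rcases hrk with h | ⟨h1, h2, _⟩ <;> omega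
      · rcases hB with ⟨b, hb0, hBeq⟩ | ⟨⟨hBne, hBcls, _⟩, _⟩
        · rw [hBeq] at hlen; simp at hlen
        · have h0' := heq 0 (by simp)
          have hB0mem : B.getD 0 0 ∈ B := getD_mem' (by simp at hlen; omega) 0
          have hBpos := hBcls _ hB0mem
          have hspec := (rkEQ_spec h0').1
          have : ([MvPolynomial.C a] : List (MvPolynomial (Fin n) K)).getD 0 0 =
              MvPolynomial.C a := rfl
          rw [this] at hspec
          omega
  · -- A triangular
    have hApair : A.Pairwise (fun X Y => cls X < cls Y) :=
      List.isChain_iff_pairwise.mp hAchain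
    have hAlen : 0 < A.length := List.length_pos_iff.mpr hAne
    constructor
    · -- RittCharSet → prem ≡ 0
      rintro ⟨-, -, hmin⟩ F hF
      by_contra hR0
      set R := premTS F A with hRdef
      have hRI : R ∈ I := premTS_mem hF hAI
      have hred : ∀ T ∈ A, RReduced R T := premTS_reduced hAcls hApair
      rcases Nat.eq_zero_or_pos (cls R) with hcls0 | hclsp
      · -- R is a nonzero constant
        have hvars : R.vars = ∅ := cls_eq_zero_iff.mp hcls0
        have hRC : R = MvPolynomial.C (MvPolynomial.coeff 0 R) := eq_C_of_vars_eq_empty hvars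
        have hcoeff : MvPolynomial.coeff 0 R ≠ 0 := fun h => hR0 (by rw [hRC, h, map_zero])
        apply hmin [R] (Or.inl ⟨MvPolynomial.coeff 0 R, hcoeff, by rw [← hRC]⟩)
          (by intro b hb; simp at hb; rw [hb]; exact hRI)
        left
        refine ⟨0, by simp [hAlen], fun i hi => absurd hi (by omega), ?_⟩
        have hget : ([R] : List (MvPolynomial (Fin n) K)).getD 0 0 = R := rfl
        rw [hget]
        left
        have := hAcls _ (getD_mem' hAlen 0)
        omega
      · by_cases hex : ∃ k, k < A.length ∧ rkLT R (A.getD k 0)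
        · set j := Nat.find hex with hjdef
          obtain ⟨hjlt, hjrk⟩ := Nat.find_spec hex
          have hmin' : ∀ i, i < j → ¬ rkLT R (A.getD i 0) := fun i hi hr =>
            Nat.find_min hex hi ⟨by omega, hr⟩
          have hclslt : ∀ i, i < j → cls (A.getD i 0) < cls R := fun i hi =>
            cls_lt_of_reduced_not_rkLT hclsp (hAcls _ (getD_mem' (by omega) 0))
              (hred _ (getD_mem' (by omega) 0)) (hmin' i hi)
          have htakelen : (A.take j).length = j := by simp; omega
          set B := A.take j ++ [R] with hBdef
          have hBlen : B.length = j + 1 := by rw [hBdef, List.length_append, htakelen]; rfl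
          have hgetB : ∀ i, i < j → B.getD i 0 = A.getD i 0 := by
            intro i hi
            rw [hBdef, getD_append_left' _ _ _ (by omega) 0,
              List.getD_eq_getElem _ _ (by omega), List.getD_eq_getElem _ _ (by omega),
              List.getElem_take]
          have hgetBj : B.getD j 0 = R := by
            rw [hBdef]
            have := getD_snoc_self (A.take j) R 0
            rw [htakelen] at this
            exact this
          have hmemtake : ∀ T ∈ A.take j, T ∈ A ∧ ∃ i, i < j ∧ A.getD i 0 = T := by
            intro T hT
            refine ⟨List.take_subset j A hT, ?_⟩
            obtain ⟨i, hi, hEq⟩ := List.mem_iff_getElem.mp hT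
            have hij : i < j := by omega
            refine ⟨i, hij, ?_⟩
            rw [List.getD_eq_getElem _ _ (by omega), ← hEq, List.getElem_take]
          apply hmin B
          · refine Or.inr ⟨⟨by simp [hBdef], ?_, ?_⟩, ?_⟩
            · intro T hT
              rcases List.mem_append.mp (hBdef ▸ hT) with h | h
              · exact hAcls T (List.take_subset j A h)
              · simp at h; rw [h]; exact hclsp
            · refine List.isChain_iff_pairwise.mpr ?_
              rw [hBdef, List.pairwise_append]
              refine ⟨hApair.sublist (List.take_sublist _ _), by simp, ?_⟩
              intro x hx y hy
              simp at hy; subst hy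
              obtain ⟨-, i, hi, hEq⟩ := hmemtake x hx
              rw [← hEq]
              exact hclslt i hi
            · rw [hBdef, List.pairwise_append]
              refine ⟨hpred.sublist (List.take_sublist _ _), by simp, ?_⟩
              intro x hx y hy
              simp at hy; subst hy
              exact hred x (hmemtake x hx).1
          · intro b hb
            rcases List.mem_append.mp (hBdef ▸ hb) with h | h
            · exact hAI b (List.take_subset j A h)
            · simp at h; rw [h]; exact hRI
          · left
            refine ⟨j, by omega, fun i hi => ?_, ?_⟩
            · rw [hgetB i hi]; exact rkEQ_refl _
            · rw [hgetBj]; exact hjrk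
        · push_neg at hex
          have hclslt : ∀ T ∈ A, cls T < cls R := by
            intro T hT
            obtain ⟨i, hi, hEq⟩ := List.mem_iff_getElem.mp hT
            have hTg : A.getD i 0 = T := by rw [List.getD_eq_getElem _ _ hi, hEq]
            exact cls_lt_of_reduced_not_rkLT hclsp (hAcls T hT) (hred T hT)
              (hTg ▸ hex i hi)
          set B := A ++ [R] with hBdef
          apply hmin B
          · refine Or.inr ⟨⟨by simp [hBdef], ?_, ?_⟩, ?_⟩
            · intro T hT
              rcases List.mem_append.mp (hBdef ▸ hT) with h | h
              · exact hAcls T h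
              · simp at h; rw [h]; exact hclsp
            · refine List.isChain_iff_pairwise.mpr ?_
              rw [hBdef, List.pairwise_append]
              refine ⟨hApair, by simp, ?_⟩
              intro x hx y hy
              simp at hy; subst hy
              exact hclslt x hx
            · rw [hBdef, List.pairwise_append]
              refine ⟨hpred, by simp, ?_⟩
              intro x hx y hy
              simp at hy; subst hy
              exact hred x hx
          · intro b hb
            rcases List.mem_append.mp (hBdef ▸ hb) with h | h
            · exact hAI b h
            · simp at h; rw [h]; exact hRI
          · right
            refine ⟨by simp [hBdef], fun i hi => ?_⟩
            rw [hBdef, getD_append_left' _ _ _ hi 0]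
            exact rkEQ_refl _
    · -- prem ≡ 0 → RittCharSet
      intro hprem
      refine ⟨Or.inr ⟨⟨hAne, hAcls, hAchain⟩, hpred⟩, hAI, ?_⟩
      intro B hB hBI hlt
      obtain ⟨j, hjB, hjles, hcase⟩ :
          ∃ j, j < B.length ∧ (∀ i, i < j → rkEQ (A.getD i 0) (B.getD i 0)) ∧
            ((j < A.length ∧ rkLT (B.getD j 0) (A.getD j 0)) ∨ j = A.length) := by
        rcases hlt with ⟨j, hj, hles, hr⟩ | ⟨hlen, hles⟩
        · exact ⟨j, by omega, hles, Or.inl ⟨by omega, hr⟩⟩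
        · exact ⟨A.length, hlen, fun i hi => hles i hi, Or.inr rfl⟩
      set W := B.getD j 0 with hWdef
      have hWmem : W ∈ B := getD_mem' hjB 0
      have hWI : W ∈ I := hBI W hWmem
      have hWne : W ≠ 0 := by
        rcases hB with ⟨b, hb0, hBeq⟩ | ⟨⟨hBne, hBcls, _⟩, _⟩
        · rw [hBeq] at hWmem
          simp at hWmem
          rw [hWmem]
          intro h
          exact hb0 (by simpa using congrArg (MvPolynomial.coeff 0) h)
        · have hpos := hBcls W hWmem
          intro h
          rw [h, cls_eq_zero_iff.mpr MvPolynomial.vars_0] at hpos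
          omega
      have hredW : ∀ T ∈ A, RReduced W T := by
        intro T hT
        obtain ⟨k, hk, hEq⟩ := List.mem_iff_getElem.mp hT
        have hTg : A.getD k 0 = T := by rw [List.getD_eq_getElem _ _ hk, hEq]
        rcases lt_or_ge k j with hkj | hkj
        · -- k < j : use pairwise reducedness of B
          obtain ⟨hBpair, hBcls⟩ :
              B.Pairwise (fun X Y => RReduced Y X) ∧ (∀ T ∈ B, 0 < cls T) := by
            rcases hB with ⟨b, hb0, hBeq⟩ | ⟨⟨_, hBcls, _⟩, hBpair⟩
            · exfalso; rw [hBeq] at hjB; simp at hjB; omega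
            · exact ⟨hBpair, hBcls⟩
          have hrkeq := hjles k hkj
          have hA_k : 0 < cls (A.getD k 0) := hAcls _ (getD_mem' hk 0)
          have hWBk : RReduced W (B.getD k 0) := by
            have h := List.pairwise_iff_getElem.mp hBpair k j (by omega) hjB hkj
            rw [hWdef, List.getD_eq_getElem _ _ hjB, List.getD_eq_getElem _ _ (by omega)]
            exact h
          rw [← hTg]
          exact RReduced_congr hrkeq hA_k hWBk
        · rcases hcase with ⟨hjA, hjrk⟩ | rfl
          · rcases eq_or_lt_of_le hkj with hkeq | hkj'
            · rw [← hTg, ← hkeq]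
              exact RReduced_of_rkLT (hkeq ▸ hAcls _ (getD_mem' hk 0)) hjrk
            · have h1 : cls (A.getD j 0) < cls (A.getD k 0) := by
                have h := List.pairwise_iff_getElem.mp hApair j k hjA hk hkj'
                rw [List.getD_eq_getElem _ _ hjA, List.getD_eq_getElem _ _ hk]
                exact h
              have h2 : cls W ≤ cls (A.getD j 0) := by
                rcases hjrk with h | ⟨h, _⟩ <;> omega
              rw [← hTg]
              exact RReduced_of_cls_lt (by omega)
          · exact absurd hk (by omega)
      have hWfix : premTS W A = W := premTS_of_reduced hAcls hredW
      have h0' := hprem W hWI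
      rw [hWfix] at h0'
      exact hWne h0'

end CharSets
end

section
/- For any polynomial F and any triangular set T = [T_1,…,T_r] in k[x_1,…,x_n], there exist polynomials A, B_1,…,B_r ∈ k[x_1,…,x_n] such that res(F, T) = A·F + B_1·T_1 + ⋯ + B_r·T_r; in particular, the iterated resultant res(F, T) lies in the ideal ⟨F, T_1,…,T_r⟩. -/
open MvPolynomial

namespace CharSets

variable {n : ℕ} {K : Type*} [Field K]

lemma sum_coefv (i : Fin n) (F : MvPolynomial (Fin n) K) :
    ∑ d ∈ Finset.range (F.degreeOf i + 1), coefv i d F * X i ^ d = F := by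
  have h : ∀ m ∈ F.support, m i ∈ Finset.range (F.degreeOf i + 1) := by
    intro m hm
    simp only [Finset.mem_range, Nat.lt_succ_iff, degreeOf_eq_sup]
    exact Finset.le_sup (f := fun m => m i) hm
  calc ∑ d ∈ Finset.range (F.degreeOf i + 1), coefv i d F * X i ^ d
      = ∑ d ∈ Finset.range (F.degreeOf i + 1),
          ∑ m ∈ F.support.filter (fun m => m i = d),
            monomial m (F.coeff m) := by
        refine Finset.sum_congr rfl fun d _ => ?_
        rw [coefv, Finset.sum_mul]
        refine Finset.sum_congr rfl fun m hm => ?_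
        rw [Finset.mem_filter] at hm
        rw [X_pow_eq_monomial, monomial_mul, mul_one, ← hm.2, Finsupp.erase_add_single]
    _ = ∑ m ∈ F.support, monomial m (F.coeff m) :=
        Finset.sum_fiberwise_of_maps_to h _
    _ = F := support_sum_monomial_coeff F

/-- Row-sum computation for a Sylvester-type row. -/
lemma rowsum (i : Fin n) (P : MvPolynomial (Fin n) K) (N a : ℕ)
    (ha : a + P.degreeOf i < N) :
    ∑ c ∈ Finset.range N,
        (if a ≤ c ∧ c ≤ a + P.degreeOf i then coefv i (P.degreeOf i + a - c) P else 0) *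
          X i ^ (N - 1 - c) =
      X i ^ (N - 1 - a - P.degreeOf i) * P := by
  set dP := P.degreeOf i with hdP
  have h1 : ∀ c, (if a ≤ c ∧ c ≤ a + dP then coefv i (dP + a - c) P else 0) * X i ^ (N - 1 - c)
      = if a ≤ c ∧ c ≤ a + dP then coefv i (dP + a - c) P * X i ^ (N - 1 - c) else 0 := by
    intro c; split <;> simp
  simp only [h1]
  rw [← Finset.sum_filter]
  have h2 : (Finset.range N).filter (fun c => a ≤ c ∧ c ≤ a + dP) = Finset.Icc a (a + dP) := by
    ext c; simp only [Finset.mem_filter, Finset.mem_range, Finset.mem_Icc]; omega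
  rw [h2]
  have h3 : Finset.Icc a (a + dP) = Finset.Ico a (a + dP + 1) := by
    rw [Nat.Icc_eq_range', Nat.Ico_eq_range']
  rw [h3, Finset.sum_Ico_eq_sum_range]
  have h4 : a + dP + 1 - a = dP + 1 := by omega
  rw [h4]
  have h5 : ∀ j ∈ Finset.range (dP + 1),
      coefv i (dP + a - (a + j)) P * X i ^ (N - 1 - (a + j))
        = (fun d => coefv i d P * X i ^ (N - 1 - a - dP + d)) (dP + 1 - 1 - j) := by
    intro j hj
    rw [Finset.mem_range] at hj
    simp only []
    congr 2 <;> omega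
  rw [Finset.sum_congr rfl h5,
    Finset.sum_range_reflect (fun d => coefv i d P * X i ^ (N - 1 - a - dP + d)) (dP + 1)]
  conv_rhs => rw [← sum_coefv i P]
  rw [Finset.mul_sum]
  refine Finset.sum_congr rfl fun d _ => ?_
  rw [← mul_assoc, mul_comm (X i ^ _), mul_assoc, ← pow_add]

lemma resv_mem (F G : MvPolynomial (Fin n) K) (i : Fin n) (hG : 0 < G.degreeOf i) :
    resv F G i ∈ Ideal.span {F, G} := by
  set dF := F.degreeOf i with hdF
  set dG := G.degreeOf i with hdG
  set N := dG + dF with hN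
  set M := sylvester i F G with hM
  set v : Fin N → MvPolynomial (Fin n) K := fun c => X i ^ (N - 1 - (c : ℕ)) with hv
  have hFmem : F ∈ Ideal.span ({F, G} : Set (MvPolynomial (Fin n) K)) :=
    Ideal.subset_span (Set.mem_insert _ _)
  have hGmem : G ∈ Ideal.span ({F, G} : Set (MvPolynomial (Fin n) K)) :=
    Ideal.subset_span (Set.mem_insert_of_mem _ rfl)
  have hMv : ∀ r : Fin N, M.mulVec v r ∈ Ideal.span ({F, G} : Set (MvPolynomial (Fin n) K)) := by
    intro r
    rcases lt_or_ge (r : ℕ) dG with hr | hr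
    · have heq : M.mulVec v r = ∑ c ∈ Finset.range N,
          (if (r : ℕ) ≤ c ∧ c ≤ (r : ℕ) + dF then coefv i (dF + (r : ℕ) - c) F else 0) *
            X i ^ (N - 1 - c) := by
        rw [Matrix.mulVec, dotProduct, ← Fin.sum_univ_eq_sum_range]
        refine Finset.sum_congr rfl fun c _ => ?_
        simp only [hM, sylvester, Matrix.of_apply, ← hdG, ← hdF, hr, if_pos, hv]
      rw [heq, rowsum i F N r (by omega)]
      exact Ideal.mul_mem_left _ _ hFmem
    · have heq : M.mulVec v r = ∑ c ∈ Finset.range N,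
          (if (r : ℕ) - dG ≤ c ∧ c ≤ ((r : ℕ) - dG) + dG then
            coefv i (dG + ((r : ℕ) - dG) - c) G else 0) * X i ^ (N - 1 - c) := by
        rw [Matrix.mulVec, dotProduct, ← Fin.sum_univ_eq_sum_range]
        refine Finset.sum_congr rfl fun c _ => ?_
        have hr' : ¬ ((r : ℕ) < dG) := by omega
        have h2 : (r : ℕ) - dG + dG = (r : ℕ) := by omega
        simp only [hM, sylvester, Matrix.of_apply, ← hdG, ← hdF, hr', if_neg, if_false, hv, h2]
      rw [heq, rowsum i G N ((r : ℕ) - dG) (by have := r.2; omega)]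
      exact Ideal.mul_mem_left _ _ hGmem
  have hNpos : 0 < N := by omega
  set last : Fin N := ⟨N - 1, by omega⟩ with hlast
  have key : M.det • v = M.adjugate.mulVec (M.mulVec v) := by
    rw [Matrix.mulVec_mulVec, Matrix.adjugate_mul, Matrix.smul_mulVec, Matrix.one_mulVec]
  have hdet : M.det = ∑ c : Fin N, M.adjugate last c * M.mulVec v c := by
    have h := congrFun key last
    have hvlast : v last = 1 := by
      simp only [hv, hlast]
      norm_num
    rw [Pi.smul_apply, hvlast, smul_eq_mul, mul_one] at h
    rw [h]
    rfl
  have hres : resv F G i = M.det := rfl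
  rw [hres, hdet]
  exact Ideal.sum_mem _ fun c _ => Ideal.mul_mem_left _ _ (hMv c)

lemma resLv_mem (F G : MvPolynomial (Fin n) K) :
    resLv F G ∈ Ideal.span ({F, G} : Set (MvPolynomial (Fin n) K)) := by
  rw [resLv]
  split_ifs with h
  · refine resv_mem F G _ ?_
    have hi : G.vars.max' h ∈ G.vars := G.vars.max'_mem h
    rw [mem_vars] at hi
    obtain ⟨m, hm, him⟩ := hi
    rw [degreeOf_eq_sup]
    have h1 : 0 < m (G.vars.max' h) :=
      Nat.pos_of_ne_zero (Finsupp.mem_support_iff.mp him)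
    exact lt_of_lt_of_le h1 (Finset.le_sup (f := fun m => m (G.vars.max' h)) hm)
  · exact Ideal.subset_span (Set.mem_insert _ _)

lemma resTS_mem (F : MvPolynomial (Fin n) K) (L : List (MvPolynomial (Fin n) K)) :
    resTS F L ∈ Ideal.span ({F} ∪ {T | T ∈ L} : Set (MvPolynomial (Fin n) K)) := by
  induction L with
  | nil => exact Ideal.subset_span (Or.inl rfl)
  | cons T L ih =>
    have h1 : resTS F (T :: L) = resLv (resTS F L) T := rfl
    rw [h1]
    have h2 : Ideal.span ({resTS F L, T} : Set (MvPolynomial (Fin n) K)) ≤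
        Ideal.span ({F} ∪ {T' | T' ∈ T :: L} : Set (MvPolynomial (Fin n) K)) := by
      rw [Ideal.span_le]
      intro x hx
      rcases hx with hx | hx
      · subst hx
        refine Ideal.span_mono ?_ ih
        intro y hy
        rcases hy with hy | hy
        · exact Or.inl hy
        · exact Or.inr (List.mem_cons_of_mem _ hy)
      · rw [Set.mem_singleton_iff] at hx
        subst hx
        exact Ideal.subset_span (Or.inr List.mem_cons_self)
    exact h2 (resLv_mem (resTS F L) T)

lemma extraction {F : MvPolynomial (Fin n) K} {L : List (MvPolynomial (Fin n) K)}
    {x : MvPolynomial (Fin n) K}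
    (hx : x ∈ Ideal.span ({F} ∪ {T | T ∈ L} : Set (MvPolynomial (Fin n) K))) :
    ∃ A : MvPolynomial (Fin n) K, ∃ B : ℕ → MvPolynomial (Fin n) K,
      x = A * F + ∑ i ∈ Finset.range L.length, B i * L.getD i 0 := by
  rw [Ideal.span_union, Submodule.mem_sup] at hx
  obtain ⟨y, hy, z, hz, hyz⟩ := hx
  obtain ⟨A, hA⟩ := Ideal.mem_span_singleton'.mp hy
  rw [show (Ideal.span {T | T ∈ L} : Ideal (MvPolynomial (Fin n) K))
      = Submodule.span _ {T | T ∈ L} from rfl, Submodule.mem_span_set'] at hz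
  obtain ⟨m, f, g, hg⟩ := hz
  choose idx hlt heq using fun j : Fin m => List.mem_iff_getElem.mp (g j).2
  refine ⟨A, fun i => ∑ j ∈ Finset.univ.filter (fun j => idx j = i), f j, ?_⟩
  have hz' : ∑ i ∈ Finset.range L.length,
      (∑ j ∈ Finset.univ.filter (fun j => idx j = i), f j) * L.getD i 0 = z := by
    calc ∑ i ∈ Finset.range L.length,
        (∑ j ∈ Finset.univ.filter (fun j => idx j = i), f j) * L.getD i 0
        = ∑ i ∈ Finset.range L.length,
            ∑ j ∈ Finset.univ.filter (fun j => idx j = i), f j * L.getD (idx j) 0 := by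
          refine Finset.sum_congr rfl fun i _ => ?_
          rw [Finset.sum_mul]
          refine Finset.sum_congr rfl fun j hj => ?_
          rw [Finset.mem_filter] at hj
          rw [hj.2]
      _ = ∑ j : Fin m, f j * L.getD (idx j) 0 :=
          Finset.sum_fiberwise_of_maps_to (fun j _ => Finset.mem_range.mpr (hlt j)) _
      _ = ∑ j : Fin m, f j • (g j : MvPolynomial (Fin n) K) := by
          refine Finset.sum_congr rfl fun j _ => ?_
          rw [smul_eq_mul, List.getD_eq_getElem _ _ (hlt j), heq j]
      _ = z := hg
  rw [hz', hA, hyz]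

/-- For any polynomial `F` and triangular set `T = [T_1, …, T_r]`, there
are polynomials `A, B_1, …, B_r` with `res(F, T) = A·F + B_1·T_1 + ⋯ + B_r·T_r`; in
particular `res(F, T) ∈ ⟨F, T_1, …, T_r⟩`. -/
theorem statement5 {n : ℕ} {K : Type*} [Field K]
    (F : MvPolynomial (Fin n) K) (L : List (MvPolynomial (Fin n) K))
    (hT : TriangularSet L) :
    (∃ A : MvPolynomial (Fin n) K, ∃ B : ℕ → MvPolynomial (Fin n) K,
        resTS F L = A * F + ∑ i ∈ Finset.range L.length, B i * L.getD i 0) ∧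
      resTS F L ∈ Ideal.span ({F} ∪ {T | T ∈ L} : Set (MvPolynomial (Fin n) K)) := by
  exact ⟨extraction (resTS_mem F L), resTS_mem F L⟩

end CharSets
end
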